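/- Let β > 0, γ ∈ (0,1], and let n ≥ 1 and m be integers. Let s, z : (0,∞) → ℝ be twice differentiable with s continuous and s(r) > 0 for all r, satisfying the Nielsen–Olesen equations (NO): s'' + s'/r − [z² + (β/2)(s² − 1)] s = 0 and z'' + z'/r − z/r² − z s² = 0 on (0,∞). Assume: z(r) > 0 for r in some interval (0,a); z(r) → 0 and r z(r) → 0 as r → ∞; (z(r) − n/r)/r → z₀ and z'(r) + z(r)/r → 2z₀ as r → 0⁺ for some real z₀; z'(r) + z(r)/r → 0 as r → ∞; r ↦ z s² is integrable on (0,∞); and s(r₀) ≠ 0 for some r₀. Define x(r) := (γ−1) z(r) − (2γn+m)/(2r) and y(r) := γ z(r) − (2γn+m)/(2r). Suppose u, v : (0,∞) → ℝ, with v twice differentiable, u differentiable and r ↦ r u(r)(γ s(r)² + 4 v(r)²) differentiable, satisfy on (0,∞) the equations (V): v'' + v'/r − v/r² + 2(2y'u + y u' + y u/r) − 4 v u² − γ v s² = 0, (U): v' y − v y' + (2y² + (γ/2) s² + 2v²) u = 0, and (I) with α = 1: (r u (γ s² + 4 v²))' + 2r (γ x s² + 4 y u²) v = 0. Assume u and v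 are not both identically zero, v(r) → 0 as r → 0⁺ and as r → ∞, and, in case y has no zero on (0,∞), the function Φ(r) := r u v (γ s² + 4 v²)/y tends to 0 as r → 0⁺ and as r → ∞, Φ' is integrable, and the functions r ↦ 2r{[1 + (v² + (γ/4)s²)/y²](γ s² + 4 v²) + 4 v²} u² and r ↦ 2r (x/y) γ s² v² are integrable on (0,∞). Then −2n < m < 0. -/

import Mathlib

open Set Filter MeasureTheory Topology Real

set_option maxHeartbeats 2000000 in
/-- Theorem 2 of the paper: any solution of the W field equations (V), (U), (I) (with
`α = 1`) in the fixed background of the embedded Nielsen–Olesen vortex, with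
nonvanishing `u, v`, must satisfy `−2n < m < 0`. -/
theorem statement7 (β γ : ℝ) (hβ : 0 < β) (hγ : γ ∈ Set.Ioc (0:ℝ) 1)
    (n m : ℤ) (hn : 1 ≤ n)
    (s z s' s'' z' z'' : ℝ → ℝ) (z₀ : ℝ)
    (hsd : ∀ r ∈ Set.Ioi (0:ℝ), HasDerivAt s (s' r) r)
    (hsd' : ∀ r ∈ Set.Ioi (0:ℝ), HasDerivAt s' (s'' r) r)
    (hzd : ∀ r ∈ Set.Ioi (0:ℝ), HasDerivAt z (z' r) r)
    (hzd' : ∀ r ∈ Set.Ioi (0:ℝ), HasDerivAt z' (z'' r) r)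
    (hspos : ∀ r : ℝ, 0 < r → 0 < s r)
    (hNOs : ∀ r ∈ Set.Ioi (0:ℝ),
      s'' r + s' r / r - (z r ^ 2 + β / 2 * (s r ^ 2 - 1)) * s r = 0)
    (hNOz : ∀ r ∈ Set.Ioi (0:ℝ),
      z'' r + z' r / r - z r / r ^ 2 - z r * s r ^ 2 = 0)
    (hza : ∃ a : ℝ, 0 < a ∧ ∀ r : ℝ, 0 < r → r < a → 0 < z r)
    (hzinf : Filter.Tendsto z Filter.atTop (nhds 0))
    (hrzinf : Filter.Tendsto (fun r => r * z r) Filter.atTop (nhds 0))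
    (hz0 : Filter.Tendsto (fun r => (z r - (n:ℝ) / r) / r)
      (nhdsWithin 0 (Set.Ioi 0)) (nhds z₀))
    (hg0 : Filter.Tendsto (fun r => z' r + z r / r)
      (nhdsWithin 0 (Set.Ioi 0)) (nhds (2 * z₀)))
    (hginf : Filter.Tendsto (fun r => z' r + z r / r) Filter.atTop (nhds 0))
    (hintzs : MeasureTheory.IntegrableOn (fun r => z r * s r ^ 2) (Set.Ioi 0))
    (hsne : ∃ r₀ : ℝ, 0 < r₀ ∧ s r₀ ≠ 0)
    (x y y' u v u' v' v'' U' : ℝ → ℝ)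
    (hxdef : ∀ r : ℝ, x r = (γ - 1) * z r - (2 * γ * (n:ℝ) + (m:ℝ)) / (2 * r))
    (hydef : ∀ r : ℝ, y r = γ * z r - (2 * γ * (n:ℝ) + (m:ℝ)) / (2 * r))
    (hyd : ∀ r ∈ Set.Ioi (0:ℝ), HasDerivAt y (y' r) r)
    (hud : ∀ r ∈ Set.Ioi (0:ℝ), HasDerivAt u (u' r) r)
    (hvd : ∀ r ∈ Set.Ioi (0:ℝ), HasDerivAt v (v' r) r)
    (hvd' : ∀ r ∈ Set.Ioi (0:ℝ), HasDerivAt v' (v'' r) r)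
    (hUd : ∀ r ∈ Set.Ioi (0:ℝ),
      HasDerivAt (fun t => t * u t * (γ * s t ^ 2 + 4 * v t ^ 2)) (U' r) r)
    (hV : ∀ r ∈ Set.Ioi (0:ℝ),
      v'' r + v' r / r - v r / r ^ 2
        + 2 * (2 * y' r * u r + y r * u' r + y r * u r / r)
        - 4 * v r * u r ^ 2 - γ * v r * s r ^ 2 = 0)
    (hU : ∀ r ∈ Set.Ioi (0:ℝ),
      v' r * y r - v r * y' r
        + (2 * y r ^ 2 + γ / 2 * s r ^ 2 + 2 * v r ^ 2) * u r = 0)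
    (hI : ∀ r ∈ Set.Ioi (0:ℝ),
      U' r + 2 * r * (γ * x r * s r ^ 2 + 4 * y r * u r ^ 2) * v r = 0)
    (hnontriv : ∃ r : ℝ, 0 < r ∧ (u r ≠ 0 ∨ v r ≠ 0))
    (hv0 : Filter.Tendsto v (nhdsWithin 0 (Set.Ioi 0)) (nhds 0))
    (hvinf : Filter.Tendsto v Filter.atTop (nhds 0))
    (hcond : (∀ r : ℝ, 0 < r → y r ≠ 0) →
      (Filter.Tendsto
          (fun r => r * u r * v r * (γ * s r ^ 2 + 4 * v r ^ 2) / y r)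
          (nhdsWithin 0 (Set.Ioi 0)) (nhds 0)
        ∧ Filter.Tendsto
          (fun r => r * u r * v r * (γ * s r ^ 2 + 4 * v r ^ 2) / y r)
          Filter.atTop (nhds 0)
        ∧ MeasureTheory.IntegrableOn
          (deriv (fun r => r * u r * v r * (γ * s r ^ 2 + 4 * v r ^ 2) / y r))
          (Set.Ioi 0)
        ∧ MeasureTheory.IntegrableOn
          (fun r => 2 * r * ((1 + (v r ^ 2 + γ / 4 * s r ^ 2) / y r ^ 2)
              * (γ * s r ^ 2 + 4 * v r ^ 2) + 4 * v r ^ 2) * u r ^ 2)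
          (Set.Ioi 0)
        ∧ MeasureTheory.IntegrableOn
          (fun r => 2 * r * (x r / y r) * γ * s r ^ 2 * v r ^ 2) (Set.Ioi 0))) :
    -2 * n < m ∧ m < 0 := by
  by_contra hcontra
  push_neg at hcontra
  obtain ⟨hγ0, hγ1⟩ := hγ
  have hn1 : (1:ℝ) ≤ (n:ℝ) := by exact_mod_cast hn
  obtain ⟨a, ha, hzaa⟩ := hza
  -- continuity of z on Ioi 0
  have hzc : ∀ r ∈ Set.Ioi (0:ℝ), ContinuousAt z r := fun r hr => (hzd r hr).continuousAt
  -- the function g = z' + z/r with g' = z s²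
  set g : ℝ → ℝ := fun r => z' r + z r / r with hgdef
  have hgd : ∀ r ∈ Set.Ioi (0:ℝ), HasDerivAt g (z r * s r ^ 2) r := by
    intro r hr
    have hr0 : (r:ℝ) ≠ 0 := ne_of_gt hr
    have hdiv : HasDerivAt (fun t => z t / t) ((z' r * r - z r) / r ^ 2) r := by
      have := (hzd r hr).div (hasDerivAt_id' r) hr0
      simp only [mul_one] at this
      exact this
    have h1 : HasDerivAt g (z'' r + (z' r * r - z r) / r ^ 2) r := (hzd' r hr).add hdiv
    have e : (z' r * r - z r) / r ^ 2 = z' r / r - z r / r ^ 2 := by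
      field_simp
    have h2 : z'' r + (z' r * r - z r) / r ^ 2 = z r * s r ^ 2 := by
      rw [e]; linarith [hNOz r hr]
    rwa [h2] at h1
  -- the function w = r z with w' = r g
  set w : ℝ → ℝ := fun r => r * z r with hwdef
  have hwd : ∀ r ∈ Set.Ioi (0:ℝ), HasDerivAt w (r * g r) r := by
    intro r hr
    have hr0 : (r:ℝ) ≠ 0 := ne_of_gt hr
    have h1 : HasDerivAt w (1 * z r + r * z' r) r := (hasDerivAt_id r).mul (hzd r hr)
    have h2 : 1 * z r + r * z' r = r * g r := by
      simp only [hgdef]; field_simp; ring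
    rwa [h2] at h1
  have hwc : ∀ r ∈ Set.Ioi (0:ℝ), ContinuousAt w r := fun r hr => (hwd r hr).continuousAt
  -- limits of w
  have hw0 : Filter.Tendsto w (nhdsWithin 0 (Set.Ioi 0)) (nhds (n:ℝ)) := by
    have h1 : Filter.Tendsto (fun r : ℝ => (z r - (n:ℝ) / r) / r * r ^ 2 + (n:ℝ))
        (nhdsWithin 0 (Set.Ioi 0)) (nhds (z₀ * 0 ^ 2 + (n:ℝ))) := by
      exact Filter.Tendsto.add (hz0.mul ((continuous_pow 2).continuousAt.tendsto.mono_left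
        (by simpa using nhdsWithin_le_nhds))) tendsto_const_nhds
    have h2 : z₀ * 0 ^ 2 + (n:ℝ) = (n:ℝ) := by ring
    rw [h2] at h1
    refine h1.congr' ?_
    filter_upwards [self_mem_nhdsWithin] with r hr
    have hr0 : (r:ℝ) ≠ 0 := ne_of_gt hr
    simp only [hwdef]; field_simp; ring
  have hwtop : Filter.Tendsto w Filter.atTop (nhds 0) := hrzinf
  -- MVT helper for w
  have wslope : ∀ p q : ℝ, 0 < p → p < q → ∃ c ∈ Set.Ioo p q, c * g c = (w q - w p) / (q - p) := by
    intro p q hp hpq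
    refine exists_hasDerivAt_eq_slope w (fun t => t * g t) hpq ?_ ?_
    · intro t ht
      exact ((hwd t (lt_of_lt_of_le hp ht.1)).continuousAt).continuousWithinAt
    · intro t ht
      exact hwd t (lt_trans hp ht.1)
  -- z is nonnegative on (0,∞)
  have znn : ∀ r : ℝ, 0 < r → 0 ≤ z r := by
    by_contra hneg
    push_neg at hneg
    obtain ⟨r₁, hr₁, hzr₁⟩ := hneg
    have har₁ : a ≤ r₁ := by
      by_contra h
      push_neg at h
      exact absurd (hzaa r₁ hr₁ h) (not_lt.2 hzr₁.le)
    have ha2 : (0:ℝ) < a / 2 := by linarith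
    have ha2r₁ : a / 2 < r₁ := by linarith
    have hza2 : 0 < z (a/2) := hzaa _ ha2 (by linarith)
    have hzcon : ∀ p q : ℝ, 0 < p → ContinuousOn z (Set.Icc p q) := by
      intro p q hp
      intro t ht
      exact (hzc t (lt_of_lt_of_le hp ht.1)).continuousWithinAt
    -- left zero b
    set T : Set ℝ := {t | t ∈ Set.Icc (a/2) r₁ ∧ z t = 0} with hTdef
    have hTclosed : IsClosed T := by
      have : T = Set.Icc (a/2) r₁ ∩ z ⁻¹' {0} := rfl
      rw [this]
      exact ContinuousOn.preimage_isClosed_of_isClosed (hzcon _ _ ha2) isClosed_Icc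
        isClosed_singleton
    have hTne : T.Nonempty := by
      have h0mem : (0:ℝ) ∈ Set.Icc (z r₁) (z (a/2)) := ⟨hzr₁.le, hza2.le⟩
      obtain ⟨t, ht, hzt⟩ := intermediate_value_Icc' ha2r₁.le (hzcon _ _ ha2) h0mem
      exact ⟨t, ht, hzt⟩
    have hTbdd : BddAbove T := ⟨r₁, fun t ht => ht.1.2⟩
    set b : ℝ := sSup T with hbdef
    have hbT : b ∈ T := hTclosed.csSup_mem hTne hTbdd
    have hb0 : 0 < b := lt_of_lt_of_le ha2 hbT.1.1
    have hzb : z b = 0 := hbT.2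
    have hbr₁ : b < r₁ := lt_of_le_of_ne hbT.1.2 (fun h => by rw [h] at hzb; linarith)
    have hznegl : ∀ t : ℝ, b < t → t ≤ r₁ → z t < 0 := by
      intro t hbt htr₁
      rcases lt_trichotomy (z t) 0 with h | h | h
      · exact h
      · exact absurd (le_csSup hTbdd ⟨⟨le_trans hbT.1.1 hbt.le, htr₁⟩, h⟩) (not_le.2 hbt)
      · have h0mem : (0:ℝ) ∈ Set.Icc (z r₁) (z t) := ⟨hzr₁.le, h.le⟩
        obtain ⟨t', ht', hzt'⟩ := intermediate_value_Icc' htr₁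
          (hzcon _ _ (lt_trans hb0 hbt)) h0mem
        have : t' ∈ T := ⟨⟨le_trans hbT.1.1 (le_trans hbt.le ht'.1), ht'.2⟩, hzt'⟩
        have : t' ≤ b := le_csSup hTbdd this
        have : z t = 0 := by
          rcases eq_or_lt_of_le ht'.1 with h' | h'
          · rw [h']; exact hzt'
          · exfalso; linarith
        linarith
    -- MVT gives a point p with g p < 0
    have hwb : w b = 0 := by simp [hwdef, hzb]
    have hwr₁ : w r₁ < 0 := mul_neg_of_pos_of_neg hr₁ hzr₁
    obtain ⟨p, hp, hpslope⟩ := wslope b r₁ hb0 hbr₁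
    have hgp : g p < 0 := by
      have hp0 : 0 < p := lt_trans hb0 hp.1
      have : p * g p < 0 := by
        rw [hpslope, hwb]
        apply div_neg_of_neg_of_pos <;> linarith
      by_contra h
      push_neg at h
      nlinarith
    by_cases hright : ∃ t : ℝ, r₁ < t ∧ 0 ≤ z t
    · -- there is a zero c to the right
      obtain ⟨t₂, ht₂, hzt₂⟩ := hright
      set T2 : Set ℝ := {t | t ∈ Set.Icc r₁ t₂ ∧ z t = 0} with hT2def
      have hT2closed : IsClosed T2 := by
        have : T2 = Set.Icc r₁ t₂ ∩ z ⁻¹' {0} := rfl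
        rw [this]
        exact ContinuousOn.preimage_isClosed_of_isClosed (hzcon _ _ hr₁) isClosed_Icc
          isClosed_singleton
      have hT2ne : T2.Nonempty := by
        have h0mem : (0:ℝ) ∈ Set.Icc (z r₁) (z t₂) := ⟨hzr₁.le, hzt₂⟩
        obtain ⟨t, ht, hzt⟩ := intermediate_value_Icc ht₂.le (hzcon _ _ hr₁) h0mem
        exact ⟨t, ht, hzt⟩
      have hT2bdd : BddBelow T2 := ⟨r₁, fun t ht => ht.1.1⟩
      set c : ℝ := sInf T2 with hcdef
      have hcT2 : c ∈ T2 := hT2closed.csInf_mem hT2ne hT2bdd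
      have hzc' : z c = 0 := hcT2.2
      have hr₁c : r₁ < c := lt_of_le_of_ne hcT2.1.1 (fun h => by rw [← h] at hzc'; linarith)
      have hznegr : ∀ t : ℝ, r₁ ≤ t → t < c → z t < 0 := by
        intro t htr₁ htc
        rcases lt_trichotomy (z t) 0 with h | h | h
        · exact h
        · exact absurd (csInf_le hT2bdd ⟨⟨htr₁, le_trans htc.le hcT2.1.2⟩, h⟩) (not_le.2 htc)
        · have h0mem : (0:ℝ) ∈ Set.Icc (z r₁) (z t) := ⟨hzr₁.le, h.le⟩
          obtain ⟨t', ht', hzt'⟩ := intermediate_value_Icc htr₁ (hzcon _ _ hr₁) h0mem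
          have : t' ∈ T2 := ⟨⟨ht'.1, le_trans ht'.2 (le_trans htc.le hcT2.1.2)⟩, hzt'⟩
          have hct' : c ≤ t' := csInf_le hT2bdd this
          have : z t = 0 := by
            rcases eq_or_lt_of_le ht'.2 with h' | h'
            · rw [← h']; exact hzt'
            · exfalso; linarith
          linarith
      -- g is antitone on [b,c]
      have ganti : AntitoneOn g (Set.Icc b c) := by
        apply antitoneOn_of_deriv_nonpos (convex_Icc b c)
        · intro t ht
          exact ((hgd t (lt_of_lt_of_le hb0 ht.1)).continuousAt).continuousWithinAt
        · intro t ht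
          rw [interior_Icc] at ht
          exact (hgd t (lt_trans hb0 ht.1)).differentiableAt.differentiableWithinAt
        · intro t ht
          rw [interior_Icc] at ht
          rw [(hgd t (lt_trans hb0 ht.1)).deriv]
          have hzt : z t < 0 := by
            rcases le_or_gt t r₁ with h | h
            · exact hznegl t ht.1 h
            · exact hznegr t h.le ht.2
          exact mul_nonpos_of_nonpos_of_nonneg hzt.le (sq_nonneg _)
      have hwc' : w c = 0 := by simp [hwdef, hzc']
      obtain ⟨q, hq, hqslope⟩ := wslope r₁ c hr₁ hr₁c
      have hgq : 0 < g q := by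
        have hq0 : 0 < q := lt_trans hr₁ hq.1
        have : 0 < q * g q := by
          rw [hqslope, hwc']
          apply div_pos <;> linarith
        by_contra h
        push_neg at h
        nlinarith
      have : g q ≤ g p :=
        ganti ⟨hp.1.le, le_trans hp.2.le hr₁c.le⟩
          ⟨(lt_trans hbr₁ hq.1).le, hq.2.le⟩ (lt_trans hp.2 hq.1).le
      linarith
    · -- z < 0 on (r₁, ∞): w → -∞, contradiction with w → 0
      push_neg at hright
      have hznegr : ∀ t : ℝ, r₁ < t → z t < 0 := fun t ht => hright t ht
      -- g antitone on [b, ∞)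
      have ganti : AntitoneOn g (Set.Ici b) := by
        apply antitoneOn_of_deriv_nonpos (convex_Ici b)
        · intro t ht
          exact ((hgd t (lt_of_lt_of_le hb0 ht)).continuousAt).continuousWithinAt
        · intro t ht
          rw [interior_Ici] at ht
          exact (hgd t (lt_trans hb0 ht)).differentiableAt.differentiableWithinAt
        · intro t ht
          rw [interior_Ici] at ht
          rw [(hgd t (lt_trans hb0 ht)).deriv]
          have hzt : z t < 0 := by
            rcases le_or_gt t r₁ with h | h
            · exact hznegl t ht h
            · exact hznegr t h
          exact mul_nonpos_of_nonpos_of_nonneg hzt.le (sq_nonneg _)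
      -- w decreases at rate at least p * (-g p) beyond p
      have hp0 : 0 < p := lt_trans hb0 hp.1
      set δ : ℝ := p * (-(g p)) with hδdef
      have hδ : 0 < δ := mul_pos hp0 (by linarith)
      -- for any R > r₁ : w R ≤ w r₁ - δ (R - r₁)... use slope bound
      have hbound : ∀ R : ℝ, r₁ < R → w R ≤ w r₁ + p * g p * (R - r₁) := by
        intro R hR
        obtain ⟨ξ, hξ, hξslope⟩ := wslope r₁ R hr₁ hR
        have hξ0 : 0 < ξ := lt_trans hr₁ hξ.1
        have hgξ : g ξ ≤ g p :=
          ganti hp.1.le (le_trans hbr₁.le hξ.1.le) (lt_trans hp.2 hξ.1).le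
        have hpξ : p < ξ := lt_trans hp.2 hξ.1
        have h1 : ξ * g ξ ≤ p * g p := by nlinarith [hgp, hgξ, hpξ, hp0]
        have h2 : (w R - w r₁) / (R - r₁) ≤ p * g p := by rw [← hξslope]; exact h1
        have hRr : 0 < R - r₁ := by linarith
        have h3 : (w R - w r₁) / (R - r₁) * (R - r₁) ≤ p * g p * (R - r₁) :=
          mul_le_mul_of_nonneg_right h2 hRr.le
        rw [div_mul_cancel₀ _ (ne_of_gt hRr)] at h3
        linarith
      -- but w → 0 at ∞
      have hev : ∀ᶠ R in Filter.atTop, |w R| < 1 := by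
        have := hwtop
        rw [Metric.tendsto_atTop] at this
        obtain ⟨R₀, hR₀⟩ := this 1 one_pos
        filter_upwards [Filter.eventually_ge_atTop R₀] with R hR
        simpa [Real.dist_eq] using hR₀ R hR
      obtain ⟨R, hR1, hR2⟩ := ((hev.and (Filter.eventually_ge_atTop
        (r₁ + (|w r₁| + 2) / δ))).exists)
      have hRr₁ : r₁ < R := by
        have : 0 < (|w r₁| + 2) / δ := div_pos (by linarith [abs_nonneg (w r₁)]) hδ
        linarith
      have := hbound R hRr₁
      have h3 : p * g p * (R - r₁) ≤ -( |w r₁| + 2) := by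
        have h4 : R - r₁ ≥ (|w r₁| + 2) / δ := by linarith
        have h5 : p * g p = -δ := by rw [hδdef]; ring
        rw [h5]
        have h6 : δ * (R - r₁) ≥ |w r₁| + 2 := by
          rw [ge_iff_le, ← div_le_iff₀' hδ]; linarith
        linarith
      have h7 : w r₁ ≤ |w r₁| := le_abs_self _
      have h8 : w R ≤ -2 := by linarith
      have h9 : -1 < w R := by
        have := abs_lt.1 hR1
        linarith [this.1]
      linarith
  -- g is monotone on (0,∞)
  have gmono : MonotoneOn g (Set.Ioi (0:ℝ)) := by
    apply monotoneOn_of_deriv_nonneg (convex_Ioi 0)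
    · intro t ht; exact ((hgd t ht).continuousAt).continuousWithinAt
    · intro t ht
      rw [interior_Ioi] at ht
      exact (hgd t ht).differentiableAt.differentiableWithinAt
    · intro t ht
      rw [interior_Ioi] at ht
      rw [(hgd t ht).deriv]
      exact mul_nonneg (znn t ht) (sq_nonneg _)
  -- g ≤ 0 on (0,∞)
  have gnp : ∀ r : ℝ, 0 < r → g r ≤ 0 := by
    intro r hr
    refine ge_of_tendsto hginf ?_
    filter_upwards [Filter.Ioi_mem_atTop r] with t ht
    exact gmono hr (Set.mem_Ioi.2 (lt_trans hr ht)) ht.le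
  -- w is antitone on (0,∞)
  have wanti : AntitoneOn w (Set.Ioi (0:ℝ)) := by
    apply antitoneOn_of_deriv_nonpos (convex_Ioi 0)
    · intro t ht; exact ((hwd t ht).continuousAt).continuousWithinAt
    · intro t ht
      rw [interior_Ioi] at ht
      exact (hwd t ht).differentiableAt.differentiableWithinAt
    · intro t ht
      rw [interior_Ioi] at ht
      rw [(hwd t ht).deriv]
      exact mul_nonpos_of_nonneg_of_nonpos ht.le (gnp t ht)
  -- w ≤ n on (0,∞)
  have wlen : ∀ r : ℝ, 0 < r → w r ≤ (n:ℝ) := by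
    intro r hr
    refine ge_of_tendsto hw0 ?_
    filter_upwards [Ioo_mem_nhdsGT_of_mem (Set.left_mem_Ico.2 hr)] with t ht
    exact wanti ht.1 hr ht.2.le
  -- w < n on (0,∞)
  have wltn : ∀ r : ℝ, 0 < r → w r < (n:ℝ) := by
    intro r₁ hr₁
    rcases lt_or_eq_of_le (wlen r₁ hr₁) with h | h
    · exact h
    exfalso
    -- w ≡ n on (0, r₁]
    have hwconst : ∀ t : ℝ, 0 < t → t ≤ r₁ → w t = (n:ℝ) := by
      intro t ht htr₁
      exact le_antisymm (wlen t ht) (h ▸ wanti (Set.mem_Ioi.2 ht) (Set.mem_Ioi.2 hr₁) htr₁)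
    -- hence g = 0 on (0, r₁)
    have hgzero : ∀ t : ℝ, 0 < t → t < r₁ → g t = 0 := by
      intro t ht htr₁
      have hconst : HasDerivAt w 0 t := by
        have : Set.Ioo (0:ℝ) r₁ ∈ nhds t := Ioo_mem_nhds ht htr₁
        exact (hasDerivAt_const t ((n:ℝ))).congr_of_eventuallyEq
          (Filter.eventually_of_mem this (fun s hs => hwconst s hs.1 hs.2.le))
      have h0 := (hwd t ht).unique hconst
      have ht0 : t ≠ 0 := ne_of_gt ht
      rcases mul_eq_zero.1 h0 with h' | h'
      · exact absurd h' ht0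
      · exact h' 
    -- hence z s² = 0 on (0, r₁), so z = 0 there, contradicting w = n ≥ 1
    have hzzero : z (r₁/2) = 0 := by
      have ht : 0 < r₁/2 := by linarith
      have htr : r₁/2 < r₁ := by linarith
      have hconst : HasDerivAt g 0 (r₁/2) := by
        have : Set.Ioo (0:ℝ) r₁ ∈ nhds (r₁/2) := Ioo_mem_nhds ht htr
        exact (hasDerivAt_const (r₁/2) (0:ℝ)).congr_of_eventuallyEq
          (Filter.eventually_of_mem this (fun s hs => hgzero s hs.1 hs.2))
      have h0 := (hgd (r₁/2) ht).unique hconst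
      have hs2 : 0 < s (r₁/2) := hspos _ ht
      rcases mul_eq_zero.1 h0 with h' | h'
      · exact h'
      · exact absurd h' (by positivity)
    have := hwconst (r₁/2) (by linarith) (by linarith)
    simp only [hwdef] at this
    rw [hzzero] at this
    simp at this
    linarith
  -- w > 0 on (0,∞)
  have wpos : ∀ r : ℝ, 0 < r → 0 < w r := by
    by_contra hneg
    push_neg at hneg
    obtain ⟨r₂, hr₂, hwr₂⟩ := hneg
    have hzr₂ : z r₂ = 0 := by
      have h1 := znn r₂ hr₂
      have h2 : r₂ * z r₂ ≤ 0 := hwr₂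
      nlinarith
    have har₂ : a ≤ r₂ := by
      by_contra h
      push_neg at h
      exact absurd (hzaa r₂ hr₂ h) (by rw [hzr₂]; exact lt_irrefl 0)
    -- least zero c of z
    set T : Set ℝ := {t | t ∈ Set.Icc a r₂ ∧ z t = 0} with hTdef
    have hTclosed : IsClosed T := by
      have : T = Set.Icc a r₂ ∩ z ⁻¹' {0} := rfl
      rw [this]
      refine ContinuousOn.preimage_isClosed_of_isClosed ?_ isClosed_Icc isClosed_singleton
      intro t ht
      exact (hzc t (lt_of_lt_of_le ha ht.1)).continuousWithinAt
    have hTne : T.Nonempty := ⟨r₂, ⟨har₂, le_refl r₂⟩, hzr₂⟩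
    have hTbdd : BddBelow T := ⟨a, fun t ht => ht.1.1⟩
    set c : ℝ := sInf T with hcdef
    have hcT : c ∈ T := hTclosed.csInf_mem hTne hTbdd
    have hc0 : 0 < c := lt_of_lt_of_le ha hcT.1.1
    have hzc' : z c = 0 := hcT.2
    have hzposb : ∀ t : ℝ, 0 < t → t < c → 0 < z t := by
      intro t ht htc
      rcases lt_or_ge t a with h | h
      · exact hzaa t ht h
      · rcases lt_or_eq_of_le (znn t ht) with h' | h'
        · exact h'
        · exact absurd (csInf_le hTbdd ⟨⟨h, le_trans htc.le hcT.1.2⟩, h'.symm⟩) (not_le.2 htc)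
    -- z'(c) = 0 since c is a minimum
    have hz'c : z' c = 0 := by
      have hmin : IsLocalMin z c := by
        refine Filter.eventually_of_mem (Ioi_mem_nhds hc0) (fun t ht => ?_)
        rw [hzc']
        exact znn t ht
      exact hmin.hasDerivAt_eq_zero (hzd c hc0)
    -- t z' is monotone on [c/2, c], hence z' ≤ 0 there
    have hpd : ∀ t : ℝ, 0 < t → HasDerivAt (fun t => t * z' t) (z t / t + t * z t * s t ^ 2) t := by
      intro t ht
      have ht0 : t ≠ 0 := ne_of_gt ht
      have h1 : HasDerivAt (fun t => t * z' t) (1 * z' t + t * z'' t) t :=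
        (hasDerivAt_id t).mul (hzd' t ht)
      have h2 : 1 * z' t + t * z'' t = z t / t + t * z t * s t ^ 2 := by
        have := hNOz t ht
        field_simp at this ⊢
        nlinarith [this]
      rwa [h2] at h1
    have hpmono : MonotoneOn (fun t => t * z' t) (Set.Icc (c/2) c) := by
      apply monotoneOn_of_deriv_nonneg (convex_Icc _ _)
      · intro t ht
        exact ((hpd t (lt_of_lt_of_le (by linarith) ht.1)).continuousAt).continuousWithinAt
      · intro t ht
        rw [interior_Icc] at ht
        exact (hpd t (lt_trans (by linarith) ht.1)).differentiableAt.differentiableWithinAt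
      · intro t ht
        rw [interior_Icc] at ht
        have ht0 : 0 < t := lt_trans (by linarith) ht.1
        rw [(hpd t ht0).deriv]
        have := znn t ht0
        positivity
    have hz'le : ∀ t : ℝ, t ∈ Set.Icc (c/2) c → z' t ≤ 0 := by
      intro t ht
      have h1 : t * z' t ≤ c * z' c :=
        hpmono ht ⟨by linarith, le_refl c⟩ ht.2
      rw [hz'c, mul_zero] at h1
      have ht0 : 0 < t := lt_of_lt_of_le (by linarith) ht.1
      nlinarith
    -- bound for s on [c/2, c]
    obtain ⟨t₀, ht₀, hSmax'⟩ := isCompact_Icc.exists_isMaxOn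
      (Set.nonempty_Icc.2 (by linarith : c/2 ≤ c))
      (fun t ht => (hsd t (lt_of_lt_of_le (by linarith) ht.1)).continuousAt.continuousWithinAt)
    set S : ℝ := s t₀ with hSdef
    have hSmax : ∀ t ∈ Set.Icc (c/2) c, s t ≤ S := fun t ht => hSmax' ht
    set C : ℝ := 1 + 2/c + 4/c^2 + S^2 with hCdef
    have hCb1 : ∀ t : ℝ, t ∈ Set.Ioo (c/2) c → 1 + 1/t ≤ C := by
      intro t ht
      have ht0 : 0 < t := lt_trans (by linarith) ht.1
      have h1 : 1/t ≤ 2/c := by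
        rw [div_le_div_iff₀ ht0 hc0]
        nlinarith [ht.1]
      have h2 : (0:ℝ) ≤ 4/c^2 := by positivity
      have h3 : (0:ℝ) ≤ S^2 := sq_nonneg _
      rw [hCdef]; linarith
    have hCb2 : ∀ t : ℝ, t ∈ Set.Ioo (c/2) c → 1/t^2 + s t ^2 ≤ C := by
      intro t ht
      have ht0 : 0 < t := lt_trans (by linarith) ht.1
      have h1 : 1/t^2 ≤ 4/c^2 := by
        rw [div_le_div_iff₀ (by positivity) (by positivity)]
        nlinarith [ht.1]
      have h2 : s t ^ 2 ≤ S ^ 2 := by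
        have := hSmax t ⟨ht.1.le, ht.2.le⟩
        nlinarith [hspos t ht0]
      have h3 : (0:ℝ) < 2/c := by positivity
      rw [hCdef]; linarith
    -- the function M = (z - z') e^{C t} is monotone on [c/2, c]
    have hMd : ∀ t : ℝ, 0 < t → HasDerivAt (fun t => (z t - z' t) * Real.exp (C * t))
        ((z' t - z'' t) * Real.exp (C * t) + (z t - z' t) * (C * Real.exp (C * t))) t := by
      intro t ht
      have h1 : HasDerivAt (fun t => Real.exp (C * t)) (Real.exp (C * t) * C) t := by
        have h2 : HasDerivAt (fun t : ℝ => C * t) C t := by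
          simpa using (hasDerivAt_id t).const_mul C
        exact h2.exp
      have h3 := ((hzd t ht).sub (hzd' t ht)).mul h1
      exact h3.congr_deriv (by simp only [Pi.sub_apply]; ring)
    have hMmono : MonotoneOn (fun t => (z t - z' t) * Real.exp (C * t)) (Set.Icc (c/2) c) := by
      apply monotoneOn_of_deriv_nonneg (convex_Icc _ _)
      · intro t ht
        exact ((hMd t (lt_of_lt_of_le (by linarith) ht.1)).continuousAt).continuousWithinAt
      · intro t ht
        rw [interior_Icc] at ht
        exact (hMd t (lt_trans (by linarith) ht.1)).differentiableAt.differentiableWithinAt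
      · intro t ht
        rw [interior_Icc] at ht
        have ht0 : 0 < t := lt_trans (by linarith) ht.1
        rw [(hMd t ht0).deriv]
        have hz''e : z'' t = -(z' t)/t + z t/t^2 + z t * s t ^2 := by
          have := hNOz t ht0
          field_simp at this ⊢
          nlinarith [this]
        have hkey : z' t - z'' t + C * (z t - z' t) =
            (-(z' t)) * (C - 1 - 1/t) + z t * (C - 1/t^2 - s t ^2) := by
          rw [hz''e]
          have ht0' : t ≠ 0 := ne_of_gt ht0
          field_simp
          ring
        have h1 : 0 ≤ -(z' t) := by linarith [hz'le t ⟨ht.1.le, ht.2.le⟩]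
        have h2 : 0 ≤ z t := znn t ht0
        have h3 : 0 ≤ C - 1 - 1/t := by linarith [hCb1 t ht]
        have h4 : 0 ≤ C - 1/t^2 - s t ^2 := by linarith [hCb2 t ht]
        have h5 : 0 ≤ z' t - z'' t + C * (z t - z' t) := by
          rw [hkey]; positivity
        have h6 : (0:ℝ) < Real.exp (C * t) := Real.exp_pos _
        nlinarith
    -- conclude: z(3c/4) ≤ 0, contradiction
    have hm : (z (3*c/4) - z' (3*c/4)) * Real.exp (C * (3*c/4)) ≤
        (z c - z' c) * Real.exp (C * c) := by
      exact hMmono ⟨by linarith, by linarith⟩ ⟨by linarith, le_refl c⟩ (by linarith)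
    rw [hzc', hz'c] at hm
    simp at hm
    have hexp : (0:ℝ) < Real.exp (C * (3*c/4)) := Real.exp_pos _
    have h7 : z (3*c/4) - z' (3*c/4) ≤ 0 := by nlinarith
    have h8 : z' (3*c/4) ≤ 0 := hz'le _ ⟨by linarith, by linarith⟩
    have h9 : 0 < z (3*c/4) := hzposb _ (by linarith) (by linarith)
    linarith
  have zpos : ∀ r : ℝ, 0 < r → 0 < z r := by
    intro r hr
    have := wpos r hr
    simp only [hwdef] at this
    nlinarith [hr]
  -- sign analysis for x and y
  have hcast2n : ((-2 * n : ℤ) : ℝ) = -2 * (n:ℝ) := by push_cast; ring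
  have hmcases : 0 ≤ m ∨ m ≤ -2 * n := by
    rcases le_or_gt 0 m with hm | hm
    · exact Or.inl hm
    · right
      by_contra h
      push_neg at h
      exact absurd (hcontra h) (not_le.2 hm)
  have hyr : ∀ r : ℝ, 0 < r → r * y r = γ * w r - (γ * (n:ℝ) + (m:ℝ)/2) := by
    intro r hr
    have hr0 : r ≠ 0 := ne_of_gt hr
    rw [hydef r]
    simp only [hwdef]
    field_simp
  have hxr : ∀ r : ℝ, 0 < r → r * x r = (γ - 1) * w r - (γ * (n:ℝ) + (m:ℝ)/2) := by
    intro r hr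
    have hr0 : r ≠ 0 := ne_of_gt hr
    rw [hxdef r]
    simp only [hwdef]
    field_simp
  -- y never vanishes, and x/y ≥ 0; moreover either x/y > 0 or we are in the edge case
  have hsigns : (∀ r : ℝ, 0 < r → y r ≠ 0) ∧
      ((∀ r : ℝ, 0 < r → 0 < x r / y r) ∨ (γ = 1 ∧ m = -2 * n)) := by
    rcases hmcases with hm | hm
    · -- m ≥ 0 : y < 0 and x < 0
      have hmr : (0:ℝ) ≤ (m:ℝ) := by exact_mod_cast hm
      have hy : ∀ r : ℝ, 0 < r → y r < 0 := by
        intro r hr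
        have h1 : γ * w r - (γ * (n:ℝ) + (m:ℝ)/2) < 0 := by
          nlinarith [wltn r hr, hγ0]
        nlinarith [hyr r hr]
      have hx : ∀ r : ℝ, 0 < r → x r < 0 := by
        intro r hr
        have h1 : x r = y r - z r := by rw [hxdef r, hydef r]; ring
        linarith [zpos r hr, hy r hr]
      exact ⟨fun r hr => ne_of_lt (hy r hr),
        Or.inl (fun r hr => div_pos_of_neg_of_neg (hx r hr) (hy r hr))⟩
    · -- m ≤ -2n : y > 0
      have hmr : (m:ℝ) ≤ -2 * (n:ℝ) := by exact_mod_cast hm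
      have hy : ∀ r : ℝ, 0 < r → 0 < y r := by
        intro r hr
        have h1 : 0 < γ * w r - (γ * (n:ℝ) + (m:ℝ)/2) := by
          nlinarith [wpos r hr, hγ0, mul_nonneg (sub_nonneg.2 hγ1) (sub_nonneg.2 hn1)]
        nlinarith [hyr r hr]
      refine ⟨fun r hr => ne_of_gt (hy r hr), ?_⟩
      by_cases hedge : γ = 1 ∧ m = -2 * n
      · exact Or.inr hedge
      · left
        intro r hr
        have hx : 0 < x r := by
          have h1 : 0 < (γ - 1) * w r - (γ * (n:ℝ) + (m:ℝ)/2) := by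
            rcases lt_or_eq_of_le hγ1 with hγlt | hγeq
            · have h2 : 0 < (1 - γ) * ((n:ℝ) - w r) :=
                mul_pos (by linarith) (by linarith [wltn r hr])
              nlinarith
            · have hmne : m ≠ -2 * n := by
                intro h; exact hedge ⟨hγeq, h⟩
              have hmlt : m < -2 * n := lt_of_le_of_ne hm hmne
              have hmlt' : (m:ℝ) ≤ -2 * (n:ℝ) - 1 := by
                have h' : m ≤ -2 * n - 1 := by omega
                have h'' : (m:ℝ) ≤ ((-2 * n - 1 : ℤ) : ℝ) := by exact_mod_cast h'
                push_cast at h''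
                linarith
              rw [hγeq]
              nlinarith [wpos r hr]
          nlinarith [hxr r hr]
        exact div_pos hx (hy r hr)
  obtain ⟨hyne, hAlt⟩ := hsigns
  -- invoke the integral conditions
  obtain ⟨hΦ0, hΦtop, hΦint, hAint, hBint⟩ := hcond hyne
  set Φ : ℝ → ℝ := fun r => r * u r * v r * (γ * s r ^ 2 + 4 * v r ^ 2) / y r with hΦdef
  set Af : ℝ → ℝ := fun r =>
    2 * r * ((1 + (v r ^ 2 + γ / 4 * s r ^ 2) / y r ^ 2)
      * (γ * s r ^ 2 + 4 * v r ^ 2) + 4 * v r ^ 2) * u r ^ 2 with hAfdef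
  set Bf : ℝ → ℝ := fun r => 2 * r * (x r / y r) * γ * s r ^ 2 * v r ^ 2 with hBfdef
  -- derivative of Φ
  have hΦd : ∀ r ∈ Set.Ioi (0:ℝ), HasDerivAt Φ (-(Af r + Bf r)) r := by
    intro r hr
    have hyner := hyne r hr
    have hNd : HasDerivAt (fun t => t * u t * v t * (γ * s t ^ 2 + 4 * v t ^ 2))
        (U' r * v r + r * u r * (γ * s r ^ 2 + 4 * v r ^ 2) * v' r) r := by
      have heq : (fun t => t * u t * v t * (γ * s t ^ 2 + 4 * v t ^ 2)) =
          fun t => (t * u t * (γ * s t ^ 2 + 4 * v t ^ 2)) * v t := by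
        funext t; ring
      rw [heq]
      exact (hUd r hr).mul (hvd r hr)
    have hdd := hNd.div (hyd r hr) hyner
    have hkey : ((U' r * v r + r * u r * (γ * s r ^ 2 + 4 * v r ^ 2) * v' r) * y r
        - r * u r * v r * (γ * s r ^ 2 + 4 * v r ^ 2) * y' r) / y r ^ 2
        = -(Af r + Bf r) := by
      have hIr := hI r hr
      have hUr := hU r hr
      have hy2 : y r ^ 2 ≠ 0 := pow_ne_zero _ hyner
      have hAB : -(Af r + Bf r) * y r ^ 2 =
          -(2*r*((y r^2 + v r^2 + γ/4*s r^2)*(γ*s r^2+4*v r^2) + 4*v r^2*y r^2)*u r^2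
            + 2*r*(x r * y r)*γ*s r^2*v r^2) := by
        simp only [hAfdef, hBfdef]
        field_simp
        ring
      rw [div_eq_iff hy2, hAB]
      linear_combination (v r * y r) * hIr
        + (r * u r * (γ * s r ^ 2 + 4 * v r ^ 2)) * hUr
    rw [← hkey]
    exact hdd
  have hΦderiv : ∀ r ∈ Set.Ioi (0:ℝ), deriv Φ r = -(Af r + Bf r) :=
    fun r hr => (hΦd r hr).deriv
  -- FTC on (a', ∞)
  have hkeyint : ∀ a' : ℝ, 0 < a' → ∫ r in Set.Ioi a', deriv Φ r = -Φ a' := by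
    intro a' ha'
    have h := MeasureTheory.integral_Ioi_of_hasDerivAt_of_tendsto
      (f := Φ) (f' := deriv Φ) (a := a') (m := 0)
      ((hΦd a' ha').continuousAt.continuousWithinAt)
      (fun t ht => by
        rw [hΦderiv t (lt_trans ha' ht)]
        exact hΦd t (lt_trans ha' ht))
      (hΦint.mono_set (Set.Ioi_subset_Ioi ha'.le))
      hΦtop
    rw [h]; ring
  -- pass to the limit a' → 0⁺
  have hint0 : ∫ r in Set.Ioi (0:ℝ), deriv Φ r = 0 := by
    have hmono : Monotone (fun k : ℕ => Set.Ioi ((1:ℝ)/(k+1))) := by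
      intro i j hij
      apply Set.Ioi_subset_Ioi
      apply one_div_le_one_div_of_le
      · positivity
      · have : (i:ℝ) ≤ (j:ℝ) := by exact_mod_cast hij
        linarith
    have hunion : (⋃ k : ℕ, Set.Ioi ((1:ℝ)/(k+1))) = Set.Ioi (0:ℝ) := by
      ext t
      simp only [Set.mem_iUnion, Set.mem_Ioi]
      constructor
      · rintro ⟨k, hk⟩
        have : (0:ℝ) < 1/(k+1) := by positivity
        linarith
      · intro ht
        obtain ⟨k, hk⟩ := exists_nat_one_div_lt ht
        exact ⟨k, hk⟩
    have hs1 := MeasureTheory.tendsto_setIntegral_of_monotone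
      (fun k : ℕ => measurableSet_Ioi) hmono (by rw [hunion]; exact hΦint)
    rw [hunion] at hs1
    have hs2 : Filter.Tendsto (fun k : ℕ => ∫ r in Set.Ioi ((1:ℝ)/(k+1)), deriv Φ r)
        Filter.atTop (nhds 0) := by
      have hpos : ∀ k : ℕ, (0:ℝ) < 1/(k+1) := fun k => by positivity
      have h1 : Filter.Tendsto (fun k : ℕ => (1:ℝ)/(k+1)) Filter.atTop
          (nhdsWithin 0 (Set.Ioi 0)) := by
        apply tendsto_nhdsWithin_of_tendsto_nhds_of_eventually_within
        · exact tendsto_one_div_add_atTop_nhds_zero_nat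
        · exact Filter.Eventually.of_forall (fun k => hpos k)
      have h2 : Filter.Tendsto (fun k : ℕ => -Φ ((1:ℝ)/(k+1))) Filter.atTop (nhds (-0)) :=
        (hΦ0.comp h1).neg
      rw [neg_zero] at h2
      refine h2.congr (fun k => ?_)
      rw [← hkeyint _ (hpos k)]
    exact tendsto_nhds_unique hs1 hs2
  -- hence ∫ Af + ∫ Bf = 0
  have hintsum : (∫ r in Set.Ioi (0:ℝ), Af r) + (∫ r in Set.Ioi (0:ℝ), Bf r) = 0 := by
    have h1 : ∫ r in Set.Ioi (0:ℝ), deriv Φ r = ∫ r in Set.Ioi (0:ℝ), -(Af r + Bf r) := by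
      apply MeasureTheory.setIntegral_congr_fun measurableSet_Ioi
      intro r hr
      exact hΦderiv r hr
    rw [hint0] at h1
    rw [MeasureTheory.integral_neg, MeasureTheory.integral_add hAint hBint] at h1
    linarith
  -- nonnegativity of Af and Bf
  have hAnn : ∀ r : ℝ, r ∈ Set.Ioi (0:ℝ) → 0 ≤ Af r := by
    intro r hr
    simp only [hAfdef]
    have h1 : 0 ≤ (v r ^ 2 + γ / 4 * s r ^ 2) / y r ^ 2 :=
      div_nonneg (by nlinarith [sq_nonneg (v r), sq_nonneg (s r)]) (sq_nonneg _)
    have h2 : 0 ≤ γ * s r ^ 2 + 4 * v r ^ 2 := by nlinarith [sq_nonneg (v r), sq_nonneg (s r)]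
    have hr' : (0:ℝ) < r := hr
    have hQ : 0 ≤ (1 + (v r ^ 2 + γ / 4 * s r ^ 2) / y r ^ 2)
        * (γ * s r ^ 2 + 4 * v r ^ 2) + 4 * v r ^ 2 := by
      have h3 := mul_nonneg (show (0:ℝ) ≤ 1 + (v r ^ 2 + γ / 4 * s r ^ 2) / y r ^ 2 by linarith) h2
      nlinarith [sq_nonneg (v r)]
    exact mul_nonneg (mul_nonneg (by linarith) hQ) (sq_nonneg _)
  have hxynn : ∀ r : ℝ, 0 < r → 0 ≤ x r / y r := by
    rcases hAlt with hxy | ⟨hγeq, hmeq⟩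
    · exact fun r hr => (hxy r hr).le
    · intro r hr
      have hmr : (m:ℝ) = -2 * (n:ℝ) := by rw [hmeq]; push_cast; ring
      have hx0 : x r = 0 := by
        rw [hxdef r, hγeq, hmr]
        ring_nf
      rw [hx0]
      simp
  have hBnn : ∀ r : ℝ, r ∈ Set.Ioi (0:ℝ) → 0 ≤ Bf r := by
    intro r hr
    have hr' : (0:ℝ) < r := hr
    simp only [hBfdef]
    have h0 := hxynn r hr'
    have h1 : (0:ℝ) ≤ s r ^ 2 := sq_nonneg _
    have h2 : (0:ℝ) ≤ v r ^ 2 := sq_nonneg _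
    have h3 : (0:ℝ) ≤ 2 * r * (x r / y r) := by positivity
    positivity
  have hAzero : ∫ r in Set.Ioi (0:ℝ), Af r = 0 := by
    have h1 := MeasureTheory.setIntegral_nonneg (μ := volume) measurableSet_Ioi hAnn
    have h2 := MeasureTheory.setIntegral_nonneg (μ := volume) measurableSet_Ioi hBnn
    linarith
  have hBzero : ∫ r in Set.Ioi (0:ℝ), Bf r = 0 := by
    have h1 := MeasureTheory.setIntegral_nonneg (μ := volume) measurableSet_Ioi hAnn
    have h2 := MeasureTheory.setIntegral_nonneg (μ := volume) measurableSet_Ioi hBnn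
    linarith
  -- a.e. vanishing + continuity helper
  have hzero_of_ae : ∀ f : ℝ → ℝ, (∀ r ∈ Set.Ioi (0:ℝ), ContinuousAt f r) →
      (∀ᵐ r ∂(volume : Measure ℝ), r ∈ Set.Ioi (0:ℝ) → f r = 0) →
      ∀ r ∈ Set.Ioi (0:ℝ), f r = 0 := by
    intro f hf hae r hr
    by_contra hne
    have hev1 : ∀ᶠ t in nhds r, f t ≠ 0 := (hf r hr).eventually_ne hne
    have hev2 : ∀ᶠ t in nhds r, t ∈ Set.Ioi (0:ℝ) := Ioi_mem_nhds hr
    obtain ⟨ε, hε, hball⟩ := Metric.eventually_nhds_iff.1 (hev1.and hev2)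
    have hnull : volume {t : ℝ | ¬ (t ∈ Set.Ioi (0:ℝ) → f t = 0)} = 0 := ae_iff.1 hae
    have hsub : Set.Ioo (r - ε) (r + ε) ⊆ {t : ℝ | ¬ (t ∈ Set.Ioi (0:ℝ) → f t = 0)} := by
      intro t ht
      have hd : dist t r < ε := by
        rw [Real.dist_eq, abs_lt]
        exact ⟨by linarith [ht.1], by linarith [ht.2]⟩
      obtain ⟨h1, h2⟩ := hball hd
      intro himp
      exact h1 (himp h2)
    have hle := measure_mono_null hsub hnull
    rw [Real.volume_Ioo, ENNReal.ofReal_eq_zero] at hle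
    linarith
  -- u vanishes identically
  have hA_ae : ∀ᵐ r ∂(volume : Measure ℝ), r ∈ Set.Ioi (0:ℝ) → Af r = 0 := by
    have hnn : 0 ≤ᵐ[volume.restrict (Set.Ioi (0:ℝ))] Af :=
      (MeasureTheory.ae_restrict_iff' measurableSet_Ioi).2
        (Filter.Eventually.of_forall hAnn)
    have h2 := (MeasureTheory.integral_eq_zero_iff_of_nonneg_ae hnn hAint).1 hAzero
    exact (MeasureTheory.ae_restrict_iff' measurableSet_Ioi).1 h2
  have hu_ae : ∀ᵐ r ∂(volume : Measure ℝ), r ∈ Set.Ioi (0:ℝ) → u r = 0 := by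
    filter_upwards [hA_ae] with r h hr
    have hAr := h hr
    simp only [hAfdef] at hAr
    have hr' : (0:ℝ) < r := hr
    have hs' := hspos r hr'
    have h1 : 0 ≤ (v r ^ 2 + γ / 4 * s r ^ 2) / y r ^ 2 :=
      div_nonneg (by nlinarith [sq_nonneg (v r), sq_nonneg (s r)]) (sq_nonneg _)
    have hQ : 0 < (1 + (v r ^ 2 + γ / 4 * s r ^ 2) / y r ^ 2)
        * (γ * s r ^ 2 + 4 * v r ^ 2) + 4 * v r ^ 2 := by
      nlinarith [sq_nonneg (v r), mul_pos hγ0 (pow_pos hs' 2),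
        mul_nonneg h1 (mul_nonneg hγ0.le (sq_nonneg (s r))),
        mul_nonneg h1 (sq_nonneg (v r))]
    have hu2 : u r ^ 2 = 0 := by
      by_contra hc
      have h3 : 0 < u r ^ 2 := lt_of_le_of_ne (sq_nonneg _) (Ne.symm hc)
      have h4 := mul_pos (mul_pos (show (0:ℝ) < 2 * r by linarith) hQ) h3
      linarith
    exact pow_eq_zero_iff (two_ne_zero) |>.1 hu2
  have huzero : ∀ r ∈ Set.Ioi (0:ℝ), u r = 0 :=
    hzero_of_ae u (fun r hr => (hud r hr).continuousAt) hu_ae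
  -- v vanishes identically
  have hvzero : ∀ r ∈ Set.Ioi (0:ℝ), v r = 0 := by
    rcases hAlt with hxy | ⟨hγeq, hmeq⟩
    · -- generic case: from ∫ Bf = 0
      have hB_ae : ∀ᵐ r ∂(volume : Measure ℝ), r ∈ Set.Ioi (0:ℝ) → Bf r = 0 := by
        have hnn : 0 ≤ᵐ[volume.restrict (Set.Ioi (0:ℝ))] Bf :=
          (MeasureTheory.ae_restrict_iff' measurableSet_Ioi).2
            (Filter.Eventually.of_forall hBnn)
        have h2 := (MeasureTheory.integral_eq_zero_iff_of_nonneg_ae hnn hBint).1 hBzero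
        exact (MeasureTheory.ae_restrict_iff' measurableSet_Ioi).1 h2
      have hv_ae : ∀ᵐ r ∂(volume : Measure ℝ), r ∈ Set.Ioi (0:ℝ) → v r = 0 := by
        filter_upwards [hB_ae] with r h hr
        have hBr := h hr
        simp only [hBfdef] at hBr
        have hr' : (0:ℝ) < r := hr
        have hs' := hspos r hr'
        have hxyr := hxy r hr'
        have hv2 : v r ^ 2 = 0 := by
          by_contra hc
          have h3 : 0 < v r ^ 2 := lt_of_le_of_ne (sq_nonneg _) (Ne.symm hc)
          have h4 : 0 < 2 * r * (x r / y r) * γ * s r ^ 2 * v r ^ 2 := by positivity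
          linarith
        exact pow_eq_zero_iff (two_ne_zero) |>.1 hv2
      exact hzero_of_ae v (fun r hr => (hvd r hr).continuousAt) hv_ae
    · -- edge case γ = 1, m = -2n : v is proportional to y and must vanish
      have hmr : (m:ℝ) = -2 * (n:ℝ) := by rw [hmeq]; push_cast; ring
      have hWr : ∀ r : ℝ, 0 < r → v' r * y r - v r * y' r = 0 := by
        intro r hr
        have h0 := hU r hr
        rw [huzero r hr] at h0
        linarith [h0]
      have hqd : ∀ r ∈ Set.Ioi (0:ℝ), HasDerivAt (fun t => v t / y t) 0 r := by
        intro r hr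
        have h1 := (hvd r hr).div (hyd r hr) (hyne r hr)
        have h2 : (v' r * y r - v r * y' r) / y r ^ 2 = 0 := by
          rw [hWr r hr]; simp
        rwa [h2] at h1
      have hqconst : ∀ r : ℝ, 0 < r → v r / y r = v 1 / y 1 := by
        have key : ∀ p q : ℝ, 0 < p → p < q → v p / y p = v q / y q := by
          intro p q hp hpq
          obtain ⟨c', hc', hslope⟩ := exists_hasDerivAt_eq_slope (fun t => v t / y t)
            (fun _ => (0:ℝ)) hpq
            (fun t ht => (hqd t (lt_of_lt_of_le hp ht.1)).continuousAt.continuousWithinAt)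
            (fun t ht => hqd t (lt_trans hp ht.1))
          have h0 : (v q / y q - v p / y p) / (q - p) = 0 := hslope.symm
          rcases div_eq_zero_iff.1 h0 with h | h
          · linarith
          · exfalso; linarith [sub_ne_zero.2 (ne_of_gt hpq)]
        intro r hr
        rcases lt_trichotomy r 1 with h | h | h
        · exact key r 1 hr h
        · rw [h]
        · exact (key 1 r one_pos h).symm
      have hveq : ∀ r : ℝ, 0 < r → v r = (v 1 / y 1) * y r := by
        intro r hr
        rw [← hqconst r hr, div_mul_cancel₀ _ (hyne r hr)]
      have hyw : ∀ r : ℝ, 0 < r → r * y r = w r := by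
        intro r hr
        have h0 := hyr r hr
        rw [hγeq, hmr] at h0
        linarith
      have hk0 : v 1 / y 1 = 0 := by
        set k : ℝ := v 1 / y 1 with hkdef
        have hlim1 : Filter.Tendsto (fun r => r * v r) (nhdsWithin 0 (Set.Ioi 0))
            (nhds (k * (n:ℝ))) := by
          have h1 : Filter.Tendsto (fun r => k * w r) (nhdsWithin 0 (Set.Ioi 0))
              (nhds (k * (n:ℝ))) := hw0.const_mul k
          refine h1.congr' ?_
          filter_upwards [self_mem_nhdsWithin] with t ht
          have ht' : (0:ℝ) < t := ht
          rw [← hyw t ht', hveq t ht']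
          ring
        have hlim2 : Filter.Tendsto (fun r => r * v r) (nhdsWithin 0 (Set.Ioi 0)) (nhds 0) := by
          have h1 : Filter.Tendsto (fun r : ℝ => r) (nhdsWithin 0 (Set.Ioi 0)) (nhds 0) :=
            tendsto_id.mono_left nhdsWithin_le_nhds
          have h2 := h1.mul hv0
          simpa using h2
        have h3 : k * (n:ℝ) = 0 := tendsto_nhds_unique hlim1 hlim2
        rcases mul_eq_zero.1 h3 with h | h
        · exact h
        · exfalso; rw [h] at hn1; linarith
      intro r hr
      rw [hveq r hr, hk0, zero_mul]
  obtain ⟨r₄, hr₄, hor⟩ := hnontriv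
  rcases hor with h | h
  · exact h (huzero r₄ hr₄)
  · exact h (hvzero r₄ hr₄)
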